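/- Let $\mathcal{L}$ be a semiclassical linear moment functional on $\mathbb{C}[x]$ with data $(A,B)$, i.e., $\mathcal{L}(-Bp'+Ap)=0$ for all polynomials $p$, and let $\mu_k=\mathcal{L}(x^k)$. Then the formal generating series $F(z)=\sum_{k\geq 0}\mu_k z^k/k!$ satisfies the formal ODE $[zB(d/dz)-A(d/dz)]F(z)=0$. -/

import Mathlib

/-- the generating series `F(z) = ∑ μ_k z^k/k!` of a semiclassical linear
moment functional with data `(A,B)` satisfies the formal ODE
`[z B(d/dz) - A(d/dz)] F = 0`. -/
theorem stmt_16 (A B : Polynomial ℂ) (L : Polynomial ℂ →ₗ[ℂ] ℂ)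
    (hL : ∀ p : Polynomial ℂ,
      L (-(B * Polynomial.derivative p) + A * p) = 0) :
    letI F : PowerSeries ℂ :=
      PowerSeries.mk fun k => ((k.factorial : ℂ))⁻¹ * L (Polynomial.X ^ k)
    letI D : Module.End ℂ (PowerSeries ℂ) := (PowerSeries.derivative ℂ).toLinearMap
    letI MX : Module.End ℂ (PowerSeries ℂ) := LinearMap.mulLeft ℂ PowerSeries.X
    (MX * Polynomial.aeval D B - Polynomial.aeval D A) F = 0 := by
  set F : PowerSeries ℂ :=
    PowerSeries.mk fun k => ((k.factorial : ℂ))⁻¹ * L (Polynomial.X ^ k) with hF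
  set D : Module.End ℂ (PowerSeries ℂ) := (PowerSeries.derivative ℂ).toLinearMap with hD
  set MX : Module.End ℂ (PowerSeries ℂ) := LinearMap.mulLeft ℂ PowerSeries.X with hMXd
  -- coefficient of D^k F
  have hpow : ∀ k n : ℕ, PowerSeries.coeff n ((D ^ k) F)
      = ((n.factorial : ℂ))⁻¹ * L (Polynomial.X ^ (n + k)) := by
    intro k
    induction k with
    | zero => intro n; simp [F]
    | succ k ih =>
        intro n
        have : (D ^ (k + 1)) F = D ((D ^ k) F) := by
          rw [pow_succ']; rfl
        rw [this]
        show PowerSeries.coeff n (PowerSeries.derivative ℂ ((D ^ k) F)) = _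
        rw [PowerSeries.coeff_derivative, ih (n + 1)]
        have hfac : ((n + 1).factorial : ℂ) = (n + 1) * n.factorial := by
          push_cast [Nat.factorial_succ]; ring
        have hne : ((n : ℂ) + 1) ≠ 0 := Nat.cast_add_one_ne_zero n
        have hfacne : ((n.factorial : ℂ)) ≠ 0 := by
          exact_mod_cast Nat.cast_ne_zero.mpr n.factorial_ne_zero
        rw [hfac]
        have : n + 1 + k = n + (k + 1) := by ring
        rw [this]
        field_simp
  -- coefficient of P(D) F
  have haev : ∀ (P : Polynomial ℂ) (n : ℕ),
      PowerSeries.coeff n ((Polynomial.aeval D P) F)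
        = ((n.factorial : ℂ))⁻¹ * L (Polynomial.X ^ n * P) := by
    intro P
    induction P using Polynomial.induction_on' with
    | add p q hp hq =>
        intro n
        simp only [map_add, LinearMap.add_apply, hp n, hq n, mul_add]
    | monomial k c =>
        intro n
        rw [Polynomial.aeval_monomial]
        have : ((algebraMap ℂ (Module.End ℂ (PowerSeries ℂ))) c * D ^ k) F
            = c • ((D ^ k) F) := by
          simp [Algebra.algebraMap_eq_smul_one, Module.End.mul_apply]
        rw [this, map_smul, hpow k n, smul_eq_mul,
          ← Polynomial.C_mul_X_pow_eq_monomial]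
        have : Polynomial.X ^ n * (Polynomial.C c * Polynomial.X ^ k)
            = c • (Polynomial.X ^ (n + k) : Polynomial ℂ) := by
          rw [Polynomial.smul_eq_C_mul]; ring
        rw [this, map_smul, smul_eq_mul]
        ring
  ext n
  simp only [LinearMap.sub_apply, Module.End.mul_apply, map_sub,
    PowerSeries.coeff_zero_eq_constantCoeff] at *
  have hMX : ∀ g : PowerSeries ℂ, MX g = PowerSeries.X * g := fun g => rfl
  cases n with
  | zero =>
      have h1 := hL 1
      simp only [Polynomial.derivative_one, mul_zero, neg_zero, mul_one,
        zero_add] at h1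
      have h0 := haev A 0
      rw [PowerSeries.coeff_zero_eq_constantCoeff] at h0
      rw [hMX]
      simp [PowerSeries.coeff_zero_eq_constantCoeff, h0, h1]
  | succ n =>
      rw [hMX, map_zero, PowerSeries.coeff_succ_X_mul, haev B n, haev A (n + 1)]
      have key : L (Polynomial.X ^ (n+1) * A) = ((n:ℂ)+1) * L (Polynomial.X ^ n * B) := by
        have h1 := hL (Polynomial.X ^ (n + 1))
        rw [Polynomial.derivative_X_pow] at h1
        have hre : -(B * (Polynomial.C ((n+1 : ℕ) : ℂ) * Polynomial.X ^ (n + 1 - 1)))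
            + A * Polynomial.X ^ (n+1)
            = Polynomial.X ^ (n+1) * A - (((n:ℂ)+1)) • (Polynomial.X ^ n * B) := by
          simp only [Nat.add_sub_cancel, Polynomial.smul_eq_C_mul]
          push_cast
          ring
        rw [hre, map_sub, map_smul, sub_eq_zero, smul_eq_mul] at h1
        exact h1
      have hfac : (((n + 1).factorial : ℂ)) = ((n:ℂ)+1) * (n.factorial : ℂ) := by
        push_cast [Nat.factorial_succ]; ring
      have hne : ((n : ℂ) + 1) ≠ 0 := Nat.cast_add_one_ne_zero n
      have hfacne : ((n.factorial : ℂ)) ≠ 0 :=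
        Nat.cast_ne_zero.mpr n.factorial_ne_zero
      rw [key, hfac]
      field_simp
      ring
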